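/- Let N be a finite set with a symmetric valuation v, let a ∈ N, and suppose v i j ≤ 0 whenever a ∉ {i, j}. Let W = max_{d ∈ N, d ≠ a} v a d and assume W ≥ 0. Then every matching μ of N satisfies SW(μ) ≤ W, and there exists a matching of N with social welfare exactly W. In other words, the maximum weight matching of a star instance consists of the heaviest edge at the center (all other agents remaining singletons). -/
import Mathlib


open Finset

/-- Social welfare of a coalition `C`: `SW(C) = (Σ_{i∈C} Σ_{j∈C, j≠i} v i j) / |C|`. -/
noncomputable def coalSW {α : Type*} [DecidableEq α] (v : α → α → ℝ) (C : Finset α) : ℝ :=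
  (∑ i ∈ C, ∑ j ∈ C.erase i, v i j) / (C.card : ℝ)

/-- Social welfare of a partition: the sum of the social welfares of its parts.
For a matching and a symmetric valuation with zero diagonal, this equals the sum of
`v i j` over its two-element parts `{i, j}`. -/
noncomputable def partSW {α : Type*} [DecidableEq α] (v : α → α → ℝ) {N : Finset α}
    (π : Finpartition N) : ℝ :=
  ∑ C ∈ π.parts, coalSW v C

/-- A matching is a partition all of whose parts have at most 2 elements. -/
def IsMatching {α : Type*} [DecidableEq α] {N : Finset α} (π : Finpartition N) : Prop :=
  ∀ p ∈ π.parts, p.card ≤ 2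

lemma coalSW_singleton {α : Type*} [DecidableEq α] (v : α → α → ℝ) (i : α) :
    coalSW v ({i} : Finset α) = 0 := by
  simp [coalSW]

lemma coalSW_pair {α : Type*} [DecidableEq α] (v : α → α → ℝ)
    (hsymm : ∀ i j, v i j = v j i) {i j : α} (hij : i ≠ j) :
    coalSW v ({i, j} : Finset α) = v i j := by
  unfold coalSW
  have h1 : ({i, j} : Finset α).erase i = {j} := Finset.erase_insert (by simp [hij])
  have h2 : ({i, j} : Finset α).erase j = {i} := by
    rw [Finset.pair_comm]; exact Finset.erase_insert (by simp [hij.symm])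
  rw [Finset.sum_pair hij, h1, h2, Finset.card_insert_of_notMem (by simp [hij])]
  simp [hsymm j i]


/-- Maximum weight matchings in star instances: if all valuations not involving the
center `a` are nonpositive and `W ≥ 0` is the maximum valuation `v a d` over
`d ∈ N \ {a}`, then every matching of `N` has social welfare at most `W`, and some
matching of `N` has social welfare exactly `W`. -/
theorem stmt11 {α : Type*} [DecidableEq α] (N : Finset α) (v : α → α → ℝ)
    (hsymm : ∀ i j, v i j = v j i) (hdiag : ∀ i, v i i = 0)
    (a : α) (ha : a ∈ N)
    (hneg : ∀ i ∈ N, ∀ j ∈ N, i ≠ a → j ≠ a → v i j ≤ 0)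
    (W : ℝ) (hWmem : ∃ d ∈ N.erase a, v a d = W)
    (hWub : ∀ d ∈ N.erase a, v a d ≤ W) (hW0 : 0 ≤ W) :
    (∀ μ : Finpartition N, IsMatching μ → partSW v μ ≤ W) ∧
    (∃ μ : Finpartition N, IsMatching μ ∧ partSW v μ = W) := by
  constructor
  · intro μ hμ
    have hbound : ∀ p ∈ μ.parts, coalSW v p ≤ if a ∈ p then W else 0 := by
      intro p hp
      have hpne : p ≠ ∅ := μ.ne_bot hp
      have hpsub : p ⊆ N := μ.le hp
      have hc := hμ p hp
      interval_cases h : p.card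
      · exact absurd (Finset.card_eq_zero.mp h) hpne
      · obtain ⟨i, rfl⟩ := Finset.card_eq_one.mp h
        rw [coalSW_singleton]
        split <;> simp [hW0]
      · obtain ⟨i, j, hij, rfl⟩ := Finset.card_eq_two.mp h
        rw [coalSW_pair v hsymm hij]
        have hiN : i ∈ N := hpsub (by simp)
        have hjN : j ∈ N := hpsub (by simp)
        split
        · rename_i hap
          rcases Finset.mem_insert.mp hap with rfl | hj
          · exact hWub j (Finset.mem_erase.mpr ⟨hij.symm, hjN⟩)
          · rw [Finset.mem_singleton] at hj
            subst hj
            rw [hsymm]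
            exact hWub i (Finset.mem_erase.mpr ⟨hij, hiN⟩)
        · rename_i hap
          exact hneg i hiN j hjN (fun h => hap (by simp [h])) (fun h => hap (by simp [h]))
    calc partSW v μ ≤ ∑ p ∈ μ.parts, (if a ∈ p then W else 0) :=
          Finset.sum_le_sum hbound
      _ = W := by
          obtain ⟨p₀, ⟨hp₀, hap₀⟩, huniq⟩ := μ.existsUnique_mem ha
          rw [Finset.sum_eq_single_of_mem p₀ hp₀]
          · rw [if_pos hap₀]
          · intro q hq hqne
            rw [if_neg]
            intro haq
            exact hqne (huniq q ⟨hq, haq⟩)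
  · obtain ⟨d, hd, hvW⟩ := hWmem
    have hdN : d ∈ N := (Finset.mem_erase.mp hd).2
    have hda : d ≠ a := (Finset.mem_erase.mp hd).1
    set P : Finset α := {a, d} with hP
    have hPN : P ⊆ N := by
      intro x hx; rcases Finset.mem_insert.mp hx with rfl | hx
      · exact ha
      · rw [Finset.mem_singleton] at hx; subst hx; exact hdN
    set S : Finset (Finset α) := insert P ((N \ P).image fun x => {x}) with hS
    have hPnotim : ∀ q ∈ (N \ P).image (fun x => ({x} : Finset α)), P ≠ q := by
      intro q hq
      obtain ⟨x, hx, rfl⟩ := Finset.mem_image.mp hq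
      intro h
      have : P.card = 1 := by rw [h]; simp
      rw [hP, Finset.card_insert_of_notMem (by simp [hda.symm])] at this
      simp at this
    have hmem : ∀ q ∈ S, q = P ∨ ∃ x ∈ N \ P, q = {x} := by
      intro q hq
      rcases Finset.mem_insert.mp hq with h | h
      · exact Or.inl h
      · obtain ⟨x, hx, rfl⟩ := Finset.mem_image.mp h
        exact Or.inr ⟨x, hx, rfl⟩
    have hdisj : (S : Set (Finset α)).PairwiseDisjoint id := by
      intro q hq r hr hqr
      rcases hmem q hq with rfl | ⟨x, hx, rfl⟩ <;> rcases hmem r hr with rfl | ⟨y, hy, rfl⟩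
      · exact absurd rfl hqr
      · exact Finset.disjoint_singleton_right.mpr fun h => (Finset.mem_sdiff.mp hy).2 h
      · exact Finset.disjoint_singleton_left.mpr fun h => (Finset.mem_sdiff.mp hx).2 h
      · exact Finset.disjoint_singleton_right.mpr fun h =>
          hqr (by rw [Finset.mem_singleton.mp h])
    have hsup : S.sup id = N := by
      ext x
      simp only [Finset.mem_sup, id_eq]
      constructor
      · rintro ⟨q, hq, hx⟩
        rcases hmem q hq with rfl | ⟨y, hy, rfl⟩
        · exact hPN hx
        · rw [Finset.mem_singleton] at hx
          subst hx
          exact (Finset.mem_sdiff.mp hy).1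
      · intro hx
        by_cases hxP : x ∈ P
        · exact ⟨P, Finset.mem_insert_self _ _, hxP⟩
        · exact ⟨{x}, Finset.mem_insert_of_mem
            (Finset.mem_image_of_mem _ (Finset.mem_sdiff.mpr ⟨hx, hxP⟩)), by simp⟩
    have hbot : ⊥ ∉ S := by
      intro h
      rcases hmem _ h with h' | ⟨x, _, h'⟩
      · have : a ∈ (⊥ : Finset α) := h' ▸ (by simp [hP])
        simp at this
      · have : x ∈ (⊥ : Finset α) := h' ▸ (by simp)
        simp at this
    refine ⟨⟨S, (Finset.supIndep_iff_pairwiseDisjoint).mpr hdisj, hsup, hbot⟩, ?_, ?_⟩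
    · intro p hp
      rcases hmem p hp with rfl | ⟨x, _, rfl⟩
      · rw [hP, Finset.card_insert_of_notMem (by simp [hda.symm])]; simp
      · simp
    · unfold partSW
      show ∑ C ∈ S, coalSW v C = W
      rw [hS, Finset.sum_insert (by intro h; exact hPnotim P h rfl),
        Finset.sum_image (by intro x hx y hy h; simpa using h)]
      rw [hP, coalSW_pair v hsymm hda.symm, hvW]
      simp [coalSW_singleton]
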